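/- The operator H_{α,β,γ}f(x) = x^α ∫₀^∞ f(y) y^β/(x+y)^γ dy is bounded on L^∞((0,∞)) if and only if α > 0, β > -1 and γ = α + β + 1; moreover, in that case its operator norm equals B(β+1, α). -/

import Mathlib

open MeasureTheory Set ENNReal

/-- The Euler Beta function in the form `B(m,n) = ∫₀^∞ u^(m-1)/(1+u)^(m+n) du`. -/
noncomputable def Beta (m n : ℝ) : ℝ := ∫ u in Ioi (0:ℝ), u ^ (m - 1) / (1 + u) ^ (m + n)

/-- The measure `x^a dx` on `(0,∞)`. -/
noncomputable def wMeasure (a : ℝ) : Measure ℝ :=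
  (volume.restrict (Ioi (0:ℝ))).withDensity (fun x => ENNReal.ofReal (x ^ a))

/-- The Hilbert-type operator `H_{α,β,γ} f(x) = x^α ∫₀^∞ f(y) y^β/(x+y)^γ dy`. -/
noncomputable def Hop (α β γ : ℝ) (f : ℝ → ℝ) : ℝ → ℝ :=
  fun x => x ^ α * ∫ y in Ioi (0:ℝ), f y * y ^ β / (x + y) ^ γ

section auxiliary

lemma ker_meas (b g : ℝ) : Measurable (fun u : ℝ => u ^ b / (1 + u) ^ g) := by fun_prop

lemma aux_int1 {b g : ℝ} (hb : -1 < b) (hg : b + 1 < g) :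
    IntegrableOn (fun u : ℝ => u ^ b / (1 + u) ^ g) (Ioi 0) := by
  have hg0 : 0 < g := by linarith
  have h1 : IntegrableOn (fun u : ℝ => u ^ b / (1 + u) ^ g) (Ioc 0 1) := by
    have hbase : IntegrableOn (fun u : ℝ => u ^ b) (Ioc 0 1) := by
      have := intervalIntegral.intervalIntegrable_rpow' (a := 0) (b := 1) hb
      rwa [intervalIntegrable_iff_integrableOn_Ioc_of_le zero_le_one] at this
    refine Integrable.mono hbase (ker_meas b g).aestronglyMeasurable ?_
    filter_upwards [ae_restrict_mem measurableSet_Ioc] with u hu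
    have h1u : (1:ℝ) ≤ 1 + u := by linarith [hu.1]
    have hd : (1:ℝ) ≤ (1 + u) ^ g := Real.one_le_rpow h1u hg0.le
    rw [Real.norm_eq_abs, Real.norm_eq_abs,
      abs_of_nonneg (div_nonneg (Real.rpow_nonneg hu.1.le b) (Real.rpow_nonneg (by linarith) g)),
      abs_of_nonneg (Real.rpow_nonneg hu.1.le b)]
    exact div_le_self (Real.rpow_nonneg hu.1.le b) hd
  have h2 : IntegrableOn (fun u : ℝ => u ^ b / (1 + u) ^ g) (Ioi 1) := by
    have hbase : IntegrableOn (fun u : ℝ => u ^ (b - g)) (Ioi 1) :=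
      integrableOn_Ioi_rpow_of_lt (by linarith) one_pos
    refine Integrable.mono hbase (ker_meas b g).aestronglyMeasurable ?_
    filter_upwards [ae_restrict_mem measurableSet_Ioi] with u hu
    have hu0 : (0:ℝ) < u := lt_trans one_pos hu
    have hle : u ^ g ≤ (1 + u) ^ g := Real.rpow_le_rpow hu0.le (by linarith) hg0.le
    rw [Real.norm_eq_abs, Real.norm_eq_abs,
      abs_of_nonneg (div_nonneg (Real.rpow_nonneg hu0.le b) (Real.rpow_nonneg (by linarith) g)),
      abs_of_nonneg (Real.rpow_nonneg hu0.le _), Real.rpow_sub hu0]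
    exact div_le_div_of_nonneg_left (Real.rpow_nonneg hu0.le b) (Real.rpow_pos_of_pos hu0 g) hle
  have h := h1.union h2
  rwa [Ioc_union_Ioi_eq_Ioi zero_le_one] at h

lemma ker_eq {b g x : ℝ} (hx : 0 < x) {y : ℝ} (hy : 0 < y) :
    y ^ b / (x + y) ^ g = x ^ (b - g) * ((x⁻¹ * y) ^ b / (1 + x⁻¹ * y) ^ g) := by
  have h1 : (x⁻¹ * y) ^ b = x⁻¹ ^ b * y ^ b := Real.mul_rpow (by positivity) hy.le
  have h2 : (1 + x⁻¹ * y) = x⁻¹ * (x + y) := by field_simp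
  have h3 : (x⁻¹ * (x + y)) ^ g = x⁻¹ ^ g * (x + y) ^ g :=
    Real.mul_rpow (by positivity) (by positivity)
  have hxb := Real.rpow_pos_of_pos hx b
  have hxg := Real.rpow_pos_of_pos hx g
  have hxyg := Real.rpow_pos_of_pos (by linarith : (0:ℝ) < x + y) g
  rw [h1, h2, h3, Real.rpow_sub hx, Real.inv_rpow hx.le, Real.inv_rpow hx.le]
  field_simp

lemma aux_int_ker {b g x : ℝ} (hb : -1 < b) (hg : b + 1 < g) (hx : 0 < x) :
    IntegrableOn (fun y : ℝ => y ^ b / (x + y) ^ g) (Ioi (0:ℝ)) := by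
  have h0 : IntegrableOn (fun u : ℝ => x ^ (b - g) * (u ^ b / (1 + u) ^ g)) (Ioi (0:ℝ)) :=
    (aux_int1 hb hg).const_mul _
  have h1 : IntegrableOn (fun y : ℝ => x ^ (b - g) * ((x⁻¹ * y) ^ b / (1 + x⁻¹ * y) ^ g))
      (Ioi (0:ℝ)) := by
    have := (integrableOn_Ioi_comp_mul_left_iff
      (fun u : ℝ => x ^ (b - g) * (u ^ b / (1 + u) ^ g)) 0 (inv_pos.mpr hx)).mpr
    simp only [mul_zero] at this
    exact this h0
  refine h1.congr_fun (fun y hy => (ker_eq hx hy).symm) measurableSet_Ioi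

lemma aux_scale (b g : ℝ) {x : ℝ} (hx : 0 < x) :
    ∫ y in Ioi (0:ℝ), y ^ b / (x + y) ^ g
      = x ^ (b + 1 - g) * ∫ u in Ioi (0:ℝ), u ^ b / (1 + u) ^ g := by
  have h1 : ∫ y in Ioi (0:ℝ), y ^ b / (x + y) ^ g
      = ∫ y in Ioi (0:ℝ), x ^ (b - g) * ((x⁻¹ * y) ^ b / (1 + x⁻¹ * y) ^ g) :=
    setIntegral_congr_fun measurableSet_Ioi (fun y hy => ker_eq hx hy)
  have h2 : ∫ y in Ioi (0:ℝ), ((x⁻¹ * y) ^ b / (1 + x⁻¹ * y) ^ g)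
      = x * ∫ u in Ioi (0:ℝ), u ^ b / (1 + u) ^ g := by
    have := integral_comp_mul_left_Ioi (fun u : ℝ => u ^ b / (1 + u) ^ g) 0 (inv_pos.mpr hx)
    simp only [mul_zero, inv_inv, smul_eq_mul] at this
    exact this
  rw [h1, MeasureTheory.integral_const_mul, h2, ← mul_assoc, ← Real.rpow_add_one hx.ne']
  ring_nf

lemma aux_pos {b g : ℝ} (hb : -1 < b) (hg : b + 1 < g) :
    0 < ∫ u in Ioi (0:ℝ), u ^ b / (1 + u) ^ g := by
  have hnn : 0 ≤ᵐ[volume.restrict (Ioi (0:ℝ))] fun u : ℝ => u ^ b / (1 + u) ^ g := by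
    filter_upwards [ae_restrict_mem measurableSet_Ioi] with u hu
    have hu0 : (0:ℝ) < u := hu
    positivity
  rw [setIntegral_pos_iff_support_of_nonneg_ae hnn (aux_int1 hb hg)]
  have hsub : Ioi (0:ℝ) ⊆ Function.support (fun u : ℝ => u ^ b / (1 + u) ^ g) ∩ Ioi 0 := by
    intro u hu
    have hu0 : (0:ℝ) < u := hu
    refine ⟨?_, hu⟩
    simp only [Function.mem_support]
    positivity
  calc (0:ℝ≥0∞) < volume (Ioi (0:ℝ)) := by simp
    _ ≤ _ := measure_mono hsub

lemma ess_lower {G : ℝ → ℝ} {c p q : ℝ} (hc : 0 ≤ c) (hp : 0 < p) (hpq : p < q)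
    (h : ∀ x ∈ Ioo p q, c ≤ G x) :
    ENNReal.ofReal c ≤ eLpNorm G ⊤ (volume.restrict (Ioi (0:ℝ))) := by
  rw [eLpNorm_exponent_top]
  by_contra hlt
  push_neg at hlt
  set μ := volume.restrict (Ioi (0:ℝ))
  have hae : ∀ᵐ x ∂μ, (‖G x‖₊ : ℝ≥0∞) ≤ eLpNormEssSup G μ := enorm_ae_le_eLpNormEssSup G μ
  have hae2 : ∀ᵐ x ∂μ, x ∉ Ioo p q := by
    filter_upwards [hae] with x hx hmem
    have h1 : ENNReal.ofReal c ≤ (‖G x‖₊ : ℝ≥0∞) := by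
      rw [← ENNReal.ofReal_coe_nnreal, coe_nnnorm]
      exact ENNReal.ofReal_le_ofReal ((h x hmem).trans (le_abs_self _))
    exact absurd ((h1.trans hx).trans_lt hlt) (lt_irrefl _)
  have h0 : μ (Ioo p q) = 0 := by
    have := ae_iff.mp hae2
    simp only [not_not, setOf_mem_eq] at this
    exact this
  have : μ (Ioo p q) = ENNReal.ofReal (q - p) := by
    rw [Measure.restrict_apply' measurableSet_Ioi,
      inter_eq_self_of_subset_left (show Ioo p q ⊆ Ioi 0 from fun x hx => lt_trans hp hx.1),
      Real.volume_Ioo]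
  rw [this] at h0
  simp only [ENNReal.ofReal_eq_zero] at h0
  linarith

lemma indicator_eLpNorm_le {s t : ℝ} :
    eLpNorm ((Ioo s t).indicator (fun _ => (1:ℝ))) ⊤ (volume.restrict (Ioi (0:ℝ))) ≤ 1 := by
  rw [eLpNorm_exponent_top]
  have : eLpNormEssSup ((Ioo s t).indicator (fun _ => (1:ℝ))) (volume.restrict (Ioi (0:ℝ)))
      ≤ ENNReal.ofReal 1 := by
    refine eLpNormEssSup_le_of_ae_bound (ae_of_all _ fun x => ?_)
    by_cases hx : x ∈ Ioo s t <;> simp [indicator_apply, hx]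
  simpa using this

lemma ker_cont {b g x s t : ℝ} (hx : 0 < x) (hs : 0 < s) :
    IntegrableOn (fun y : ℝ => y ^ b / (x + y) ^ g) (Ioo s t) := by
  refine IntegrableOn.mono_set ?_ Ioo_subset_Icc_self
  refine ContinuousOn.integrableOn_Icc ?_
  refine ContinuousOn.div ?_ ?_ ?_
  · exact continuousOn_id.rpow_const fun y hy =>
      Or.inl (ne_of_gt (lt_of_lt_of_le hs hy.1))
  · exact (continuousOn_const.add continuousOn_id).rpow_const fun y hy =>
      Or.inl (ne_of_gt (by have := hy.1; dsimp; linarith))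
  · intro y hy
    exact ne_of_gt (Real.rpow_pos_of_pos (by have := hy.1; linarith) g)

lemma core {α β γ : ℝ} {C : ℝ≥0∞}
    (hC : ∀ f : ℝ → ℝ, Measurable f →
        eLpNorm (Hop α β γ f) ⊤ (volume.restrict (Ioi (0:ℝ)))
          ≤ C * eLpNorm f ⊤ (volume.restrict (Ioi (0:ℝ))))
    {s t p q : ℝ} (hs : 0 < s) (hst : s < t) (hp : 0 < p) (hpq : p < q)
    {h : ℝ → ℝ} (hh0 : ∀ y ∈ Ioo s t, 0 ≤ h y)
    (hhi : IntegrableOn h (Ioo s t))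
    (hhk : ∀ x ∈ Ioo p q, ∀ y ∈ Ioo s t, h y ≤ y ^ β / (x + y) ^ γ) :
    ENNReal.ofReal (min (p ^ α) (q ^ α) * ∫ y in Ioo s t, h y) ≤ C := by
  set f : ℝ → ℝ := (Ioo s t).indicator (fun _ => (1:ℝ)) with hf
  have hfm : Measurable f := measurable_const.indicator measurableSet_Ioo
  have hI0 : 0 ≤ ∫ y in Ioo s t, h y := setIntegral_nonneg measurableSet_Ioo hh0
  have hm0 : 0 ≤ min (p ^ α) (q ^ α) :=
    le_min (Real.rpow_nonneg hp.le α) (Real.rpow_nonneg (hp.trans hpq).le α)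
  -- lower bound for Hop f on Ioo p q
  have key : ∀ x ∈ Ioo p q, min (p ^ α) (q ^ α) * ∫ y in Ioo s t, h y ≤ Hop α β γ f x := by
    intro x hx
    have hx0 : 0 < x := hp.trans hx.1
    have hind : (fun y => f y * y ^ β / (x + y) ^ γ)
        = (Ioo s t).indicator (fun y => y ^ β / (x + y) ^ γ) := by
      funext y
      by_cases hy : y ∈ Ioo s t <;> simp [hf, indicator_apply, hy]
    have hint : ∫ y in Ioi (0:ℝ), f y * y ^ β / (x + y) ^ γ
        = ∫ y in Ioo s t, y ^ β / (x + y) ^ γ := by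
      rw [hind, setIntegral_indicator measurableSet_Ioo,
        inter_eq_self_of_subset_right (show Ioo s t ⊆ Ioi 0 from fun y hy => hs.trans hy.1)]
    have hmono : ∫ y in Ioo s t, h y ≤ ∫ y in Ioo s t, y ^ β / (x + y) ^ γ :=
      setIntegral_mono_on hhi (ker_cont hx0 hs) measurableSet_Ioo (hhk x hx)
    have hxα : min (p ^ α) (q ^ α) ≤ x ^ α := by
      rcases le_or_gt 0 α with hα | hα
      · exact (min_le_left _ _).trans (Real.rpow_le_rpow hp.le hx.1.le hα)
      · exact (min_le_right _ _).trans (Real.rpow_le_rpow_of_nonpos hx0 hx.2.le hα.le)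
    have : min (p ^ α) (q ^ α) * ∫ y in Ioo s t, h y
        ≤ x ^ α * ∫ y in Ioo s t, y ^ β / (x + y) ^ γ :=
      mul_le_mul hxα hmono hI0 (Real.rpow_nonneg hx0.le α)
    simpa [Hop, hint] using this
  have h1 : ENNReal.ofReal (min (p ^ α) (q ^ α) * ∫ y in Ioo s t, h y)
      ≤ eLpNorm (Hop α β γ f) ⊤ (volume.restrict (Ioi (0:ℝ))) :=
    ess_lower (mul_nonneg hm0 hI0) hp hpq key
  calc ENNReal.ofReal (min (p ^ α) (q ^ α) * ∫ y in Ioo s t, h y)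
      ≤ C * eLpNorm f ⊤ (volume.restrict (Ioi (0:ℝ))) := h1.trans (hC f hfm)
    _ ≤ C * 1 := mul_le_mul_right indicator_eLpNorm_le C
    _ = C := mul_one C

lemma Beta_eq (α β : ℝ) :
    Beta (β + 1) α = ∫ u in Ioi (0:ℝ), u ^ β / (1 + u) ^ (α + β + 1) := by
  rw [Beta, show β + 1 - 1 = β by ring, show β + 1 + α = α + β + 1 by ring]

lemma Beta_pos {α β : ℝ} (hα : 0 < α) (hβ : -1 < β) : 0 < Beta (β + 1) α := by
  rw [Beta_eq]
  exact aux_pos hβ (by linarith)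

-- value of H on const 1
lemma Hop_one {α β : ℝ} (hα : 0 < α) (hβ : -1 < β) {x : ℝ} (hx : 0 < x) :
    Hop α β (α + β + 1) (fun _ => 1) x = Beta (β + 1) α := by
  have h1 : (fun y : ℝ => (1:ℝ) * y ^ β / (x + y) ^ (α + β + 1))
      = fun y : ℝ => y ^ β / (x + y) ^ (α + β + 1) := by funext y; ring
  rw [Hop, h1, aux_scale β (α + β + 1) hx, Beta_eq, show β + 1 - (α + β + 1) = -α by ring,
    ← mul_assoc, ← Real.rpow_add hx, add_neg_cancel, Real.rpow_zero, one_mul]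

lemma suff {α β : ℝ} (hα : 0 < α) (hβ : -1 < β) :
    ∀ f : ℝ → ℝ, Measurable f →
      eLpNorm (Hop α β (α + β + 1) f) ⊤ (volume.restrict (Ioi (0:ℝ)))
        ≤ ENNReal.ofReal (Beta (β + 1) α) * eLpNorm f ⊤ (volume.restrict (Ioi (0:ℝ))) := by
  intro f hfm
  set μ := volume.restrict (Ioi (0:ℝ)) with hμ
  set N := eLpNorm f ⊤ μ with hN
  rcases eq_or_ne N ⊤ with hNt | hNt
  · rw [hNt, ENNReal.mul_top]
    · exact le_top
    · simp [ENNReal.ofReal_eq_zero, not_le, Beta_pos hα hβ]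
  -- bounded case
  have hg1 : β + 1 < α + β + 1 := by linarith
  have hMf : ∀ᵐ y ∂μ, ‖f y‖ ≤ N.toReal := by
    filter_upwards [enorm_ae_le_eLpNormEssSup f μ] with y hy
    have : (‖f y‖₊ : ℝ≥0∞) ≤ N := by rwa [hN, eLpNorm_exponent_top]
    have h2 := ENNReal.toReal_mono hNt this
    simpa using h2
  have hbd : ∀ᵐ x ∂μ, ‖Hop α β (α + β + 1) f x‖ ≤ N.toReal * Beta (β + 1) α := by
    filter_upwards [ae_restrict_mem measurableSet_Ioi] with x hx
    have hx0 : (0:ℝ) < x := hx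
    have hker := aux_int_ker hβ hg1 hx0
    have hnorm : ‖∫ y in Ioi (0:ℝ), f y * y ^ β / (x + y) ^ (α + β + 1)‖
        ≤ ∫ y in Ioi (0:ℝ), N.toReal * (y ^ β / (x + y) ^ (α + β + 1)) := by
      refine norm_integral_le_of_norm_le (hker.const_mul _) ?_
      filter_upwards [hMf, ae_restrict_mem measurableSet_Ioi] with y hy hy0
      have hy0' : (0:ℝ) < y := hy0
      have hknn : 0 ≤ y ^ β / (x + y) ^ (α + β + 1) := by positivity
      rw [mul_div_assoc, norm_mul, Real.norm_eq_abs (y ^ β / _), abs_of_nonneg hknn]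
      exact mul_le_mul_of_nonneg_right hy hknn
    have hval : ∫ y in Ioi (0:ℝ), N.toReal * (y ^ β / (x + y) ^ (α + β + 1))
        = N.toReal * (x ^ (-α) * Beta (β + 1) α) := by
      rw [MeasureTheory.integral_const_mul, aux_scale β (α + β + 1) hx0,
        show β + 1 - (α + β + 1) = -α by ring, Beta_eq]
    have hxa : 0 ≤ x ^ α := Real.rpow_nonneg hx0.le α
    calc ‖Hop α β (α + β + 1) f x‖
        = x ^ α * ‖∫ y in Ioi (0:ℝ), f y * y ^ β / (x + y) ^ (α + β + 1)‖ := by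
          rw [Hop, norm_mul, Real.norm_eq_abs (x ^ α), abs_of_nonneg hxa]
      _ ≤ x ^ α * (N.toReal * (x ^ (-α) * Beta (β + 1) α)) := by
          rw [← hval]; exact mul_le_mul_of_nonneg_left hnorm hxa
      _ = (x ^ α * x ^ (-α)) * (N.toReal * Beta (β + 1) α) := by ring
      _ = N.toReal * Beta (β + 1) α := by
          rw [← Real.rpow_add hx0, add_neg_cancel, Real.rpow_zero, one_mul]
  calc eLpNorm (Hop α β (α + β + 1) f) ⊤ μ
      ≤ ENNReal.ofReal (N.toReal * Beta (β + 1) α) := by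
        rw [eLpNorm_exponent_top]; exact eLpNormEssSup_le_of_ae_bound hbd
    _ = ENNReal.ofReal (Beta (β + 1) α) * N := by
        rw [mul_comm, ENNReal.ofReal_mul (Beta_pos hα hβ).le, ENNReal.ofReal_toReal hNt]
    _ = ENNReal.ofReal (Beta (β + 1) α) * eLpNorm f ⊤ μ := rfl

lemma inv_intOn {a b : ℝ} (ha : 0 < a) (hab : a < b) :
    IntegrableOn (fun y : ℝ => y⁻¹) (Ioo a b) := by
  have h : IntervalIntegrable (fun y : ℝ => (id y)⁻¹) volume a b := by
    refine intervalIntegral.intervalIntegrable_inv (fun x hx => ?_) continuousOn_id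
    have : a ≤ x := by
      rcases hx with ⟨h1, _⟩
      simpa [min_eq_left hab.le] using h1
    exact ne_of_gt (lt_of_lt_of_le ha this)
  rw [intervalIntegrable_iff_integrableOn_Ioc_of_le hab.le] at h
  exact (h.mono_set Ioo_subset_Ioc_self)

lemma inv_intVal {a b : ℝ} (ha : 0 < a) (hab : a < b) :
    ∫ y in Ioo a b, y⁻¹ = Real.log (b / a) := by
  rw [← MeasureTheory.integral_Ioc_eq_integral_Ioo,
    ← intervalIntegral.integral_of_le hab.le, integral_inv_of_pos ha (ha.trans hab)]

section nec
variable {α β γ : ℝ} {C : ℝ≥0∞}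

lemma nec_gamma (hCt : C ≠ ⊤)
    (hC : ∀ f : ℝ → ℝ, Measurable f →
        eLpNorm (Hop α β γ f) ⊤ (volume.restrict (Ioi (0:ℝ)))
          ≤ C * eLpNorm f ⊤ (volume.restrict (Ioi (0:ℝ)))) :
    γ = α + β + 1 := by
  set K := C.toReal with hK
  have hK0 : 0 ≤ K := ENNReal.toReal_nonneg
  set c₀ : ℝ := min 1 (2 ^ α) * min 1 (2 ^ β) / (2 ^ γ * max 1 (2 ^ γ)) with hc₀def
  have h2α : (0:ℝ) < 2 ^ α := Real.rpow_pos_of_pos two_pos α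
  have h2β : (0:ℝ) < 2 ^ β := Real.rpow_pos_of_pos two_pos β
  have h2γ : (0:ℝ) < 2 ^ γ := Real.rpow_pos_of_pos two_pos γ
  have hc₀ : 0 < c₀ := by
    apply div_pos (mul_pos (lt_min one_pos h2α) (lt_min one_pos h2β))
    exact mul_pos h2γ (lt_of_lt_of_le one_pos (le_max_left _ _))
  have hA : ∀ r : ℝ, 0 < r → c₀ * r ^ (α + β + 1 - γ) ≤ K := by
    intro r hr
    have h2r : (0:ℝ) < 2 * r := by linarith
    have h4r : (0:ℝ) < 4 * r := by linarith
    set cr : ℝ := min (r ^ β) ((2 * r) ^ β) / max ((2 * r) ^ γ) ((4 * r) ^ γ) with hcr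
    have hmaxpos : 0 < max ((2 * r) ^ γ) ((4 * r) ^ γ) :=
      lt_of_lt_of_le (Real.rpow_pos_of_pos h2r γ) (le_max_left _ _)
    have hminnn : 0 ≤ min (r ^ β) ((2 * r) ^ β) :=
      le_min (Real.rpow_nonneg hr.le β) (Real.rpow_nonneg h2r.le β)
    have hcr0 : 0 ≤ cr := div_nonneg hminnn hmaxpos.le
    have hcore := core hC hr (by linarith : r < 2 * r) hr (by linarith : r < 2 * r)
      (h := fun _ => cr) (fun y _ => hcr0)
      (integrableOn_const measure_Ioo_lt_top.ne enorm_ne_top)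
      (by
        intro x hx y hy
        have hy0 : 0 < y := hr.trans hy.1
        have hx0 : 0 < x := hr.trans hx.1
        have hxy0 : 0 < x + y := by linarith
        refine div_le_div₀ (Real.rpow_nonneg hy0.le β) ?_ (Real.rpow_pos_of_pos hxy0 γ) ?_
        · rcases le_or_gt 0 β with hb | hb
          · exact (min_le_left _ _).trans (Real.rpow_le_rpow hr.le hy.1.le hb)
          · exact (min_le_right _ _).trans
              (Real.rpow_le_rpow_of_nonpos hy0 hy.2.le hb.le)
        · rcases le_or_gt 0 γ with hg | hg
          · refine (Real.rpow_le_rpow hxy0.le (by linarith [hx.2, hy.2]) hg).trans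
              (le_max_right _ _)
          · refine (Real.rpow_le_rpow_of_nonpos h2r (by linarith [hx.1, hy.1]) hg.le).trans
              (le_max_left _ _))
    -- evaluate the constant integral
    have hIval : ∫ _ in Ioo r (2 * r), cr = r * cr := by
      rw [setIntegral_const, measureReal_def, Real.volume_Ioo, smul_eq_mul,
        ENNReal.toReal_ofReal (by linarith : (0:ℝ) ≤ 2 * r - r)]
      ring_nf
    have hle : ENNReal.ofReal (min (r ^ α) ((2 * r) ^ α) * (r * cr)) ≤ C := by
      rw [← hIval]; exact hcore
    have hKle : min (r ^ α) ((2 * r) ^ α) * (r * cr) ≤ K :=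
      (ENNReal.ofReal_le_iff_le_toReal hCt).mp hle
    refine le_trans ?_ hKle
    -- algebra
    have h2rα : (2 * r) ^ α = 2 ^ α * r ^ α := Real.mul_rpow two_pos.le hr.le
    have h2rβ : (2 * r) ^ β = 2 ^ β * r ^ β := Real.mul_rpow two_pos.le hr.le
    have h2rγ : (2 * r) ^ γ = 2 ^ γ * r ^ γ := Real.mul_rpow two_pos.le hr.le
    have h4rγ : (4 * r) ^ γ = 2 ^ γ * (2 ^ γ * r ^ γ) := by
      rw [show (4: ℝ) * r = 2 * (2 * r) by ring, Real.mul_rpow two_pos.le h2r.le, h2rγ]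
    have hrγ : (0:ℝ) < r ^ γ := Real.rpow_pos_of_pos hr γ
    have hrα : (0:ℝ) ≤ r ^ α := Real.rpow_nonneg hr.le α
    have hrβ : (0:ℝ) ≤ r ^ β := Real.rpow_nonneg hr.le β
    have hmax1 : (1:ℝ) ≤ max 1 (2 ^ γ) := le_max_left _ _
    have hmlow : r ^ α * min 1 (2 ^ α) ≤ min (r ^ α) ((2 * r) ^ α) := by
      refine le_min ?_ ?_
      · exact mul_le_of_le_one_right hrα (min_le_left _ _)
      · rw [h2rα, mul_comm (2 ^ α) (r ^ α)]
        exact mul_le_mul_of_nonneg_left (min_le_right _ _) hrα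
    have hcrlow : r ^ β * min 1 (2 ^ β) / (2 ^ γ * r ^ γ * max 1 (2 ^ γ)) ≤ cr := by
      refine div_le_div₀ hminnn ?_ hmaxpos ?_
      · refine le_min ?_ ?_
        · exact mul_le_of_le_one_right hrβ (min_le_left _ _)
        · rw [h2rβ, mul_comm (2 ^ β) (r ^ β)]
          exact mul_le_mul_of_nonneg_left (min_le_right _ _) hrβ
      · refine max_le ?_ ?_
        · rw [h2rγ]
          exact le_mul_of_one_le_right (by positivity) hmax1
        · rw [h4rγ, show (2:ℝ) ^ γ * (2 ^ γ * r ^ γ) = 2 ^ γ * r ^ γ * 2 ^ γ from by ring]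
          exact mul_le_mul_of_nonneg_left (le_max_right _ _) (by positivity)
    have heq : c₀ * r ^ (α + β + 1 - γ)
        = r ^ α * min 1 (2 ^ α) * (r * (r ^ β * min 1 (2 ^ β) / (2 ^ γ * r ^ γ * max 1 (2 ^ γ)))) := by
      have hpow : r ^ (α + β + 1 - γ) = r ^ α * r ^ β * r * (r ^ γ)⁻¹ := by
        rw [show α + β + 1 - γ = α + (β + (1 + -γ)) by ring, Real.rpow_add hr,
          Real.rpow_add hr, Real.rpow_add hr, Real.rpow_one, Real.rpow_neg hr.le]
        ring
      rw [hc₀def, hpow]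
      field_simp
    rw [heq]
    refine mul_le_mul hmlow (mul_le_mul_of_nonneg_left hcrlow hr.le) ?_ ?_
    · positivity
    · exact le_min hrα (Real.rpow_nonneg h2r.le α)
  by_contra hne
  have hδ : α + β + 1 - γ ≠ 0 := fun h => hne (by linarith)
  set δ := α + β + 1 - γ with hδdef
  set r : ℝ := (K / c₀ + 1) ^ δ⁻¹ with hrdef
  have hbase : (0:ℝ) < K / c₀ + 1 := by positivity
  have hr : 0 < r := Real.rpow_pos_of_pos hbase _
  have hrδ : r ^ δ = K / c₀ + 1 := by
    rw [hrdef, ← Real.rpow_mul hbase.le, inv_mul_cancel₀ hδ, Real.rpow_one]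
  have := hA r hr
  rw [hrδ] at this
  have hKc : c₀ * (K / c₀ + 1) = K + c₀ := by field_simp
  rw [hKc] at this
  linarith

lemma nec_beta (hCt : C ≠ ⊤)
    (hC : ∀ f : ℝ → ℝ, Measurable f →
        eLpNorm (Hop α β γ f) ⊤ (volume.restrict (Ioi (0:ℝ)))
          ≤ C * eLpNorm f ⊤ (volume.restrict (Ioi (0:ℝ)))) :
    -1 < β := by
  by_contra hβ'
  push_neg at hβ'
  set K := C.toReal with hK
  have hK0 : 0 ≤ K := ENNReal.toReal_nonneg
  set c₁ : ℝ := (max 1 (3 ^ γ))⁻¹ with hc₁def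
  have hmax3 : (0:ℝ) < max 1 (3 ^ γ) := lt_of_lt_of_le one_pos (le_max_left _ _)
  have hc₁ : 0 < c₁ := inv_pos.mpr hmax3
  set m₁ : ℝ := min ((1:ℝ) ^ α) (2 ^ α) with hm₁def
  have hm₁ : 0 < m₁ := lt_min (Real.rpow_pos_of_pos one_pos α) (Real.rpow_pos_of_pos two_pos α)
  have hB : ∀ ε : ℝ, 0 < ε → ε < 1 → m₁ * (c₁ * Real.log (1 / ε)) ≤ K := by
    intro ε hε hε1
    have hcore := core hC hε hε1 one_pos one_lt_two
      (h := fun y : ℝ => c₁ * y⁻¹)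
      (fun y hy => mul_nonneg hc₁.le (inv_nonneg.mpr (hε.trans hy.1).le))
      ((inv_intOn hε hε1).const_mul c₁)
      (by
        intro x hx y hy
        have hy0 : 0 < y := hε.trans hy.1
        have hxy1 : 1 < x + y := by have := hx.1; have := hy.1; linarith
        have hxy3 : x + y < 3 := by have := hx.2; have := hy.2; linarith
        have hden : (x + y) ^ γ ≤ max 1 (3 ^ γ) := by
          rcases le_or_gt 0 γ with hg | hg
          · exact (Real.rpow_le_rpow (by linarith) hxy3.le hg).trans (le_max_right _ _)
          · exact (Real.rpow_le_one_of_one_le_of_nonpos hxy1.le hg.le).trans (le_max_left _ _)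
        have hnum : y ^ (-1:ℝ) ≤ y ^ β := Real.rpow_le_rpow_of_exponent_ge hy0 hy.2.le hβ'
        have heq : c₁ * y⁻¹ = y ^ (-1:ℝ) / max 1 (3 ^ γ) := by
          rw [Real.rpow_neg_one, div_eq_mul_inv, mul_comm]
        show c₁ * y⁻¹ ≤ y ^ β / (x + y) ^ γ
        rw [heq]
        exact div_le_div₀ (Real.rpow_nonneg hy0.le β) hnum
          (Real.rpow_pos_of_pos (by linarith) γ) hden)
    have hIval : ∫ y in Ioo ε 1, c₁ * y⁻¹ = c₁ * Real.log (1 / ε) := by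
      rw [MeasureTheory.integral_const_mul, inv_intVal hε hε1]
    rw [hIval] at hcore
    exact (ENNReal.ofReal_le_iff_le_toReal hCt).mp hcore
  set ε : ℝ := Real.exp (-(K / (m₁ * c₁) + 1)) with hεdef
  have hε0 : 0 < ε := Real.exp_pos _
  have hε1 : ε < 1 := Real.exp_lt_one_iff.mpr (by
    have : 0 ≤ K / (m₁ * c₁) := by positivity
    linarith)
  have hlog : Real.log (1 / ε) = K / (m₁ * c₁) + 1 := by
    rw [one_div, Real.log_inv, hεdef, Real.log_exp]
    ring
  have := hB ε hε0 hε1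
  rw [hlog] at this
  have heq2 : m₁ * (c₁ * (K / (m₁ * c₁) + 1)) = K + m₁ * c₁ := by
    field_simp
  rw [heq2] at this
  nlinarith

lemma nec_alpha (hCt : C ≠ ⊤) (hγ : γ = α + β + 1)
    (hC : ∀ f : ℝ → ℝ, Measurable f →
        eLpNorm (Hop α β γ f) ⊤ (volume.restrict (Ioi (0:ℝ)))
          ≤ C * eLpNorm f ⊤ (volume.restrict (Ioi (0:ℝ)))) :
    0 < α := by
  by_contra hα'
  push_neg at hα'
  set K := C.toReal with hK
  have hK0 : 0 ≤ K := ENNReal.toReal_nonneg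
  set c₁ : ℝ := (max 1 (3 ^ γ))⁻¹ with hc₁def
  have hmax3 : (0:ℝ) < max 1 (3 ^ γ) := lt_of_lt_of_le one_pos (le_max_left _ _)
  have hc₁ : 0 < c₁ := inv_pos.mpr hmax3
  set m₁ : ℝ := min ((1:ℝ) ^ α) (2 ^ α) with hm₁def
  have hm₁ : 0 < m₁ := lt_min (Real.rpow_pos_of_pos one_pos α) (Real.rpow_pos_of_pos two_pos α)
  set N : ℝ := Real.exp (K / (m₁ * c₁) + 1) with hNdef
  have hN1 : 1 < N := by
    rw [show (1:ℝ) = Real.exp 0 from (Real.exp_zero).symm]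
    exact Real.exp_lt_exp.mpr (by positivity)
  have hcore := core hC one_pos hN1 one_pos one_lt_two
    (h := fun y : ℝ => c₁ * y⁻¹)
    (fun y hy => mul_nonneg hc₁.le (inv_nonneg.mpr (one_pos.trans hy.1).le))
    ((inv_intOn one_pos hN1).const_mul c₁)
    (by
      intro x hx y hy
      have hy0 : (0:ℝ) < y := one_pos.trans hy.1
      have hy1 : (1:ℝ) ≤ y := hy.1.le
      have hxy0 : 0 < x + y := by have := hx.1; linarith
      have hyγ : (0:ℝ) < y ^ γ := Real.rpow_pos_of_pos hy0 γ
      have hden : (x + y) ^ γ ≤ max 1 (3 ^ γ) * y ^ γ := by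
        rcases le_or_gt 0 γ with hg | hg
        · have h3y : x + y ≤ 3 * y := by have := hx.2; nlinarith
          calc (x + y) ^ γ ≤ (3 * y) ^ γ := Real.rpow_le_rpow hxy0.le h3y hg
            _ = 3 ^ γ * y ^ γ := Real.mul_rpow (by norm_num) hy0.le
            _ ≤ max 1 (3 ^ γ) * y ^ γ :=
                mul_le_mul_of_nonneg_right (le_max_right _ _) hyγ.le
        · have hyle : y ≤ x + y := by have := hx.1; linarith
          calc (x + y) ^ γ ≤ y ^ γ := Real.rpow_le_rpow_of_nonpos hy0 hyle hg.le
            _ ≤ max 1 (3 ^ γ) * y ^ γ := le_mul_of_one_le_left hyγ.le (le_max_left _ _)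
      have hstep1 : c₁ * y⁻¹ ≤ c₁ * y ^ (β - γ) := by
        have : y ^ (-1:ℝ) ≤ y ^ (β - γ) :=
          Real.rpow_le_rpow_of_exponent_le hy1 (by rw [hγ]; linarith)
        rw [← Real.rpow_neg_one y]
        exact mul_le_mul_of_nonneg_left this hc₁.le
      have hstep2 : c₁ * y ^ (β - γ) = y ^ β / (max 1 (3 ^ γ) * y ^ γ) := by
        rw [Real.rpow_sub hy0, hc₁def]
        field_simp
      have hstep3 : y ^ β / (max 1 (3 ^ γ) * y ^ γ) ≤ y ^ β / (x + y) ^ γ :=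
        div_le_div_of_nonneg_left (Real.rpow_nonneg hy0.le β)
          (Real.rpow_pos_of_pos hxy0 γ) hden
      show c₁ * y⁻¹ ≤ y ^ β / (x + y) ^ γ
      calc c₁ * y⁻¹ ≤ c₁ * y ^ (β - γ) := hstep1
        _ = y ^ β / (max 1 (3 ^ γ) * y ^ γ) := hstep2
        _ ≤ y ^ β / (x + y) ^ γ := hstep3)
  have hIval : ∫ y in Ioo (1:ℝ) N, c₁ * y⁻¹ = c₁ * (K / (m₁ * c₁) + 1) := by
    rw [MeasureTheory.integral_const_mul, inv_intVal one_pos hN1, div_one, hNdef, Real.log_exp]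
  rw [hIval] at hcore
  have := (ENNReal.ofReal_le_iff_le_toReal hCt).mp hcore
  have heq2 : m₁ * (c₁ * (K / (m₁ * c₁) + 1)) = K + m₁ * c₁ := by
    field_simp
  rw [heq2] at this
  nlinarith
end nec

end auxiliary

theorem stmt_12 (α β γ : ℝ) :
    ((∃ C : ℝ≥0∞, C ≠ ⊤ ∧ ∀ f : ℝ → ℝ, Measurable f →
        eLpNorm (Hop α β γ f) ⊤ (volume.restrict (Ioi (0:ℝ)))
          ≤ C * eLpNorm f ⊤ (volume.restrict (Ioi (0:ℝ))))
      ↔ (0 < α ∧ -1 < β ∧ γ = α + β + 1)) ∧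
    ((0 < α ∧ -1 < β ∧ γ = α + β + 1) →
      sInf {C : ℝ≥0∞ | ∀ f : ℝ → ℝ, Measurable f →
          eLpNorm (Hop α β γ f) ⊤ (volume.restrict (Ioi (0:ℝ)))
            ≤ C * eLpNorm f ⊤ (volume.restrict (Ioi (0:ℝ)))}
        = ENNReal.ofReal (Beta (β + 1) α)) := by
  constructor
  · constructor
    · rintro ⟨C, hCt, hC⟩
      have hγ := nec_gamma hCt hC
      exact ⟨nec_alpha hCt hγ hC, nec_beta hCt hC, hγ⟩
    · rintro ⟨hα, hβ, hγ⟩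
      subst hγ
      exact ⟨ENNReal.ofReal (Beta (β + 1) α), ENNReal.ofReal_ne_top, suff hα hβ⟩
  · rintro ⟨hα, hβ, hγ⟩
    subst hγ
    refine le_antisymm (sInf_le (suff hα hβ)) (le_sInf fun C hC => ?_)
    have h1 := hC (fun _ => 1) measurable_const
    set μ := volume.restrict (Ioi (0:ℝ)) with hμ
    have hμ0 : μ ≠ 0 := by
      intro h
      have h2 : μ (Ioi 0) = 0 := by rw [h]; simp
      rw [hμ, Measure.restrict_apply measurableSet_Ioi, inter_self] at h2
      simp [Real.volume_Ioi] at h2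
    have hone : eLpNorm (fun _ : ℝ => (1:ℝ)) ⊤ μ = 1 := by
      rw [eLpNorm_exponent_top, eLpNormEssSup_const _ hμ0]; simp
    have hHop : eLpNorm (Hop α β (α + β + 1) (fun _ => 1)) ⊤ μ
        = ENNReal.ofReal (Beta (β + 1) α) := by
      have hcongr : Hop α β (α + β + 1) (fun _ => 1) =ᵐ[μ] fun _ => Beta (β + 1) α := by
        filter_upwards [ae_restrict_mem measurableSet_Ioi] with x hx
        exact Hop_one hα hβ hx
      rw [eLpNorm_congr_ae hcongr, eLpNorm_exponent_top, eLpNormEssSup_const _ hμ0,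
        ← ofReal_norm, Real.norm_eq_abs, abs_of_nonneg (Beta_pos hα hβ).le]
    rw [hHop, hone, mul_one] at h1
    exact h1
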